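/- Let $\mu_j : \mathbb{N} \to \mathbb{R}$ for $j \in [k]$ be arm-mean sequences each with drift bounded by $\delta$ per step, i.e., $|\mu_j(t+1) - \mu_j(t)| \leq \delta$. Suppose arms are pulled in round-robin over a window of $w$ time steps ending at $t$ (each arm pulled $w/k$ times, with $k \mid w$). Let $\bar\mu_{j,t}(w)$ denote the average of $\mu_j$ over the $w/k$ times arm $j$ was pulled in this window. Then for any arms $a, b$: $\bar\mu_{a,t}(w) - \bar\mu_{b,t}(w) \leq \frac{1}{w}\sum_{s=0}^{w-1}(\mu_a(t-s) - \mu_b(t-s)) + (k-1)\delta$. -/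

import Mathlib

lemma drift_aux (δ : ℝ) (f : ℕ → ℝ) (hd : ∀ s, |f (s+1) - f s| ≤ δ) :
    ∀ (n u : ℕ), |f (u + n) - f u| ≤ (n : ℝ) * δ := by
  intro n
  induction n with
  | zero => intro u; simp
  | succ n ih =>
    intro u
    have h1 := hd (u + n)
    have h2 := ih u
    have he : u + (n + 1) = (u + n) + 1 := by omega
    calc |f (u + (n+1)) - f u|
        = |(f ((u+n)+1) - f (u+n)) + (f (u+n) - f u)| := by rw [he]; ring_nf
      _ ≤ |f ((u+n)+1) - f (u+n)| + |f (u+n) - f u| := abs_add_le _ _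
      _ ≤ δ + (n : ℝ) * δ := add_le_add h1 h2
      _ = ((n + 1 : ℕ) : ℝ) * δ := by push_cast; ring

lemma drift_dist (δ : ℝ) (f : ℕ → ℝ) (hd : ∀ s, |f (s+1) - f s| ≤ δ)
    (u v : ℕ) : |f u - f v| ≤ |(u : ℝ) - (v : ℝ)| * δ := by
  rcases le_total v u with h | h
  · obtain ⟨n, rfl⟩ := Nat.exists_eq_add_of_le h
    have h1 := drift_aux δ f hd n v
    have h2 : |((v + n : ℕ) : ℝ) - (v : ℝ)| = (n : ℝ) := by
      have he : ((v + n : ℕ) : ℝ) - (v : ℝ) = (n : ℝ) := by push_cast; ring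
      rw [he, abs_of_nonneg (Nat.cast_nonneg n)]
    rw [h2]; exact h1
  · obtain ⟨n, rfl⟩ := Nat.exists_eq_add_of_le h
    have h1 := drift_aux δ f hd n u
    have h2 : |(u : ℝ) - ((u + n : ℕ) : ℝ)| = (n : ℝ) := by
      have he : (u : ℝ) - ((u + n : ℕ) : ℝ) = -(n : ℝ) := by push_cast; ring
      rw [he, abs_neg, abs_of_nonneg (Nat.cast_nonneg n)]
    rw [h2, abs_sub_comm]; exact h1

lemma sum_abs_le (k c : ℕ) (hc : c < k) :
    (∑ r ∈ Finset.range k, |(c : ℝ) - (r : ℝ)|) * 2 ≤ (k : ℝ) * ((k : ℝ) - 1) := by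
  have hrefl : ∑ r ∈ Finset.range k, |(c : ℝ) - ((k - 1 - r : ℕ) : ℝ)|
      = ∑ r ∈ Finset.range k, |(c : ℝ) - (r : ℝ)| :=
    Finset.sum_range_reflect (fun r => |(c : ℝ) - (r : ℝ)|) k
  have key : ∀ r ∈ Finset.range k,
      |(c : ℝ) - (r : ℝ)| + |(c : ℝ) - ((k - 1 - r : ℕ) : ℝ)| ≤ (k : ℝ) - 1 := by
    intro r hr
    have hr' : r < k := Finset.mem_range.mp hr
    have hcast : ((k - 1 - r : ℕ) : ℝ) = (k : ℝ) - 1 - (r : ℝ) := by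
      have h1 : r ≤ k - 1 := by omega
      have h2 : (1:ℕ) ≤ k := by omega
      push_cast [Nat.cast_sub h1, Nat.cast_sub h2]
      ring
    rw [hcast]
    have hc1 : (c : ℝ) ≤ (k : ℝ) - 1 := by
      have : (c : ℝ) + 1 ≤ (k : ℝ) := by exact_mod_cast Nat.succ_le_of_lt hc
      linarith
    have hr1 : (r : ℝ) ≤ (k : ℝ) - 1 := by
      have : (r : ℝ) + 1 ≤ (k : ℝ) := by exact_mod_cast Nat.succ_le_of_lt hr'
      linarith
    have hc0 : (0:ℝ) ≤ (c : ℝ) := Nat.cast_nonneg c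
    have hr0 : (0:ℝ) ≤ (r : ℝ) := Nat.cast_nonneg r
    rcases abs_cases ((c : ℝ) - (r : ℝ)) with ⟨e1, _⟩ | ⟨e1, _⟩ <;>
      rcases abs_cases ((c : ℝ) - ((k : ℝ) - 1 - (r : ℝ))) with ⟨e2, _⟩ | ⟨e2, _⟩ <;>
      rw [e1, e2] <;> linarith
  calc (∑ r ∈ Finset.range k, |(c : ℝ) - (r : ℝ)|) * 2
      = ∑ r ∈ Finset.range k,
          (|(c : ℝ) - (r : ℝ)| + |(c : ℝ) - ((k - 1 - r : ℕ) : ℝ)|) := by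
        rw [Finset.sum_add_distrib, hrefl]; ring
    _ ≤ ∑ _r ∈ Finset.range k, ((k : ℝ) - 1) := Finset.sum_le_sum key
    _ = (k : ℝ) * ((k : ℝ) - 1) := by
        rw [Finset.sum_const, Finset.card_range, nsmul_eq_mul]

lemma sum_range_mul' (f : ℕ → ℝ) (k m : ℕ) :
    ∑ s ∈ Finset.range (k * m), f s
      = ∑ q ∈ Finset.range m, ∑ r ∈ Finset.range k, f (q * k + r) := by
  induction m with
  | zero => simp
  | succ m ih =>
    rw [Nat.mul_succ, Finset.sum_range_add, ih, Finset.sum_range_succ]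
    congr 1
    exact Finset.sum_congr rfl (fun r _ => by rw [Nat.mul_comm])

/-- Under round-robin sampling over a window of length `w = k * m`
ending at time `t` (arm `j` pulled at times `t - (q*k + o j)`, `q < m`, with offsets
`o j < k`), and per-step drift at most `δ` on each arm, the difference of the
sampled averages of any two arms is at most the full-window average gap plus `(k-1)δ`. -/
theorem stmt_4 (k m w t : ℕ) (hk : 1 ≤ k) (hm : 1 ≤ m) (hw : w = k * m)
    (hwt : w ≤ t) (δ : ℝ) (hδ : 0 ≤ δ)
    (μ : Fin k → ℕ → ℝ)
    (hdrift : ∀ j : Fin k, ∀ s : ℕ, |μ j (s + 1) - μ j s| ≤ δ)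
    (o : Fin k → ℕ) (ho : ∀ j, o j < k)
    (bar : Fin k → ℝ)
    (hbar : ∀ j : Fin k,
      bar j = (1 / (m : ℝ)) * ∑ q ∈ Finset.range m, μ j (t - (q * k + o j)))
    (a b : Fin k) :
    bar a - bar b ≤
      (1 / (w : ℝ)) * ∑ s ∈ Finset.range w, (μ a (t - s) - μ b (t - s)) +
        ((k : ℝ) - 1) * δ := by
  have hk0 : (0:ℝ) < (k : ℝ) := by exact_mod_cast hk
  have hm0 : (0:ℝ) < (m : ℝ) := by exact_mod_cast hm
  -- per-q bound
  have keyq : ∀ q ∈ Finset.range m,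
      (k : ℝ) * (μ a (t - (q * k + o a)) - μ b (t - (q * k + o b)))
        ≤ (∑ r ∈ Finset.range k,
            (μ a (t - (q * k + r)) - μ b (t - (q * k + r))))
          + (k : ℝ) * (((k : ℝ) - 1) * δ) := by
    intro q hq
    have hq' : q < m := Finset.mem_range.mp hq
    have hterm : ∀ r ∈ Finset.range k,
        (μ a (t - (q * k + o a)) - μ b (t - (q * k + o b)))
          - (μ a (t - (q * k + r)) - μ b (t - (q * k + r)))
        ≤ (|(o a : ℝ) - (r : ℝ)| + |(o b : ℝ) - (r : ℝ)|) * δ := by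
      intro r hr
      have hr' : r < k := Finset.mem_range.mp hr
      have hle : ∀ c : ℕ, c < k → q * k + c ≤ t := by
        intro c hck
        have : q * k + c < k * m := by
          calc q * k + c < q * k + k := by omega
            _ ≤ (m - 1) * k + k := by
                have : q ≤ m - 1 := by omega
                exact Nat.add_le_add_right (Nat.mul_le_mul_right k this) k
            _ = m * k := by cases m with | zero => omega | succ n => simp [Nat.succ_mul]
            _ = k * m := Nat.mul_comm m k
        omega
      have hcast : ∀ c : ℕ, c < k →
          ((t - (q * k + c) : ℕ) : ℝ) = (t : ℝ) - (q : ℝ) * (k : ℝ) - (c : ℝ) := by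
        intro c hck
        rw [Nat.cast_sub (hle c hck)]
        push_cast; ring
      have ha := drift_dist δ (μ a) (hdrift a) (t - (q * k + o a)) (t - (q * k + r))
      have hb := drift_dist δ (μ b) (hdrift b) (t - (q * k + r)) (t - (q * k + o b))
      rw [hcast (o a) (ho a), hcast r hr'] at ha
      rw [hcast (o b) (ho b), hcast r hr'] at hb
      have ea : |(t : ℝ) - (q:ℝ)*(k:ℝ) - (o a : ℝ) - ((t:ℝ) - (q:ℝ)*(k:ℝ) - (r:ℝ))|
          = |(o a : ℝ) - (r : ℝ)| := by
        rw [abs_sub_comm]; congr 1; ring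
      have eb : |(t : ℝ) - (q:ℝ)*(k:ℝ) - (r : ℝ) - ((t:ℝ) - (q:ℝ)*(k:ℝ) - (o b:ℝ))|
          = |(o b : ℝ) - (r : ℝ)| := by
        congr 1; ring
      rw [ea] at ha; rw [eb] at hb
      have h1 : μ a (t - (q * k + o a)) - μ a (t - (q * k + r))
          ≤ |(o a : ℝ) - (r : ℝ)| * δ :=
        (le_abs_self _).trans ha
      have h2 : μ b (t - (q * k + r)) - μ b (t - (q * k + o b))
          ≤ |(o b : ℝ) - (r : ℝ)| * δ :=
        (le_abs_self _).trans hb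
      nlinarith [h1, h2]
    have hsum := Finset.sum_le_sum hterm
    have habs : (∑ r ∈ Finset.range k,
        (|(o a : ℝ) - (r : ℝ)| + |(o b : ℝ) - (r : ℝ)|) * δ)
        ≤ (k : ℝ) * (((k : ℝ) - 1) * δ) := by
      have h1 := sum_abs_le k (o a) (ho a)
      have h2 := sum_abs_le k (o b) (ho b)
      have : ∑ r ∈ Finset.range k,
          (|(o a : ℝ) - (r : ℝ)| + |(o b : ℝ) - (r : ℝ)|) * δ
          = ((∑ r ∈ Finset.range k, |(o a : ℝ) - (r : ℝ)|)
            + (∑ r ∈ Finset.range k, |(o b : ℝ) - (r : ℝ)|)) * δ := by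
        rw [← Finset.sum_mul, Finset.sum_add_distrib]
      rw [this]
      nlinarith [h1, h2]
    have hconst : ∑ _r ∈ Finset.range k,
        (μ a (t - (q * k + o a)) - μ b (t - (q * k + o b)))
        = (k : ℝ) * (μ a (t - (q * k + o a)) - μ b (t - (q * k + o b))) := by
      rw [Finset.sum_const, Finset.card_range, nsmul_eq_mul]
    rw [Finset.sum_sub_distrib] at hsum
    rw [← hconst]
    linarith [hsum.trans habs]
  -- assemble
  have key := Finset.sum_le_sum keyq
  rw [hbar a, hbar b, hw]
  rw [sum_range_mul' (fun s => (μ a (t - s) - μ b (t - s))) k m]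
  set A : ℝ := ∑ q ∈ Finset.range m, (μ a (t - (q * k + o a)) - μ b (t - (q * k + o b)))
    with hA
  set B : ℝ := ∑ q ∈ Finset.range m, ∑ r ∈ Finset.range k,
      (μ a (t - (q * k + r)) - μ b (t - (q * k + r))) with hB
  have hkey : (k : ℝ) * A ≤ B + (m : ℝ) * ((k : ℝ) * (((k : ℝ) - 1) * δ)) := by
    have e1 : ∑ q ∈ Finset.range m,
        (k : ℝ) * (μ a (t - (q * k + o a)) - μ b (t - (q * k + o b)))
        = (k : ℝ) * A := by rw [hA, Finset.mul_sum]
    have e2 : ∑ q ∈ Finset.range m,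
        ((∑ r ∈ Finset.range k, (μ a (t - (q * k + r)) - μ b (t - (q * k + r))))
          + (k : ℝ) * (((k : ℝ) - 1) * δ))
        = B + (m : ℝ) * ((k : ℝ) * (((k : ℝ) - 1) * δ)) := by
      rw [Finset.sum_add_distrib, Finset.sum_const, Finset.card_range, nsmul_eq_mul, hB]
    rw [e1, e2] at key; exact key
  have hSab : (1 / (m : ℝ)) * (∑ q ∈ Finset.range m, μ a (t - (q * k + o a)))
      - (1 / (m : ℝ)) * (∑ q ∈ Finset.range m, μ b (t - (q * k + o b)))
      = A / (m : ℝ) := by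
    rw [hA, Finset.sum_sub_distrib]; ring
  rw [hSab]
  have hwcast : ((k * m : ℕ) : ℝ) = (k : ℝ) * (m : ℝ) := by push_cast; ring
  rw [hwcast]
  have hkm0 : (0:ℝ) < (k : ℝ) * (m : ℝ) := mul_pos hk0 hm0
  have hrhs : (1 / ((k : ℝ) * (m : ℝ))) * B + ((k : ℝ) - 1) * δ
      = (B + ((k : ℝ) * (m : ℝ)) * (((k : ℝ) - 1) * δ)) / ((k : ℝ) * (m : ℝ)) := by
    field_simp
  rw [hrhs, div_le_div_iff₀ hm0 hkm0]
  calc A * ((k : ℝ) * (m : ℝ)) = ((k : ℝ) * A) * (m : ℝ) := by ring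
    _ ≤ (B + (m : ℝ) * ((k : ℝ) * (((k : ℝ) - 1) * δ))) * (m : ℝ) :=
        mul_le_mul_of_nonneg_right hkey hm0.le
    _ = (B + ((k : ℝ) * (m : ℝ)) * (((k : ℝ) - 1) * δ)) * (m : ℝ) := by ring
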